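/- If 0 → M → N → L → 0 is a pure exact sequence of R-modules and N is semi-regular flat, then both M and L are semi-regular flat. -/

import Mathlib

open CategoryTheory

noncomputable section

/-- An ideal is semi-regular if it contains a finitely generated subideal
with zero annihilator. -/
def Ideal.IsSemiregular {R : Type} [CommRing R] (I : Ideal R) : Prop :=
  ∃ J : Ideal R, J ≤ I ∧ J.FG ∧ Submodule.annihilator J = ⊥

/-- A module is semi-regular flat if `Tor₁(R/I, M) = 0` for every finitely generated
semi-regular ideal `I`. -/
def IsSemiregularFlat (R : Type) [CommRing R] (M : Type) [AddCommGroup M] [Module R M] : Prop :=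
  ∀ I : Ideal R, I.FG → I.IsSemiregular →
    Limits.IsZero (((Tor (ModuleCat R) 1).obj (ModuleCat.of R (R ⧸ I))).obj (ModuleCat.of R M))

section Aux

open TensorProduct LinearMap

variable {R : Type} [CommRing R]

/-- The canonical map `I ⊗ X → X`. -/
def torMul (I : Ideal R) (X : Type) [AddCommGroup X] [Module R X] :
    (↥I) ⊗[R] X →ₗ[R] X :=
  TensorProduct.lift ((LinearMap.lsmul R X).comp I.subtype)

@[simp] lemma torMul_tmul (I : Ideal R) {X : Type} [AddCommGroup X] [Module R X]
    (i : I) (x : X) : torMul I X (i ⊗ₜ x) = (i : R) • x := rfl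

lemma torMul_mem (I : Ideal R) {X : Type} [AddCommGroup X] [Module R X] (t : (↥I) ⊗[R] X) :
    torMul I X t ∈ I • (⊤ : Submodule R X) := by
  induction t with
  | zero => simp
  | tmul i x => simpa using Submodule.smul_mem_smul i.2 (Submodule.mem_top (x := x))
  | add a b ha hb => rw [map_add]; exact Submodule.add_mem _ ha hb

lemma exists_torMul (I : Ideal R) {X : Type} [AddCommGroup X] [Module R X] {x : X}
    (hx : x ∈ I • (⊤ : Submodule R X)) : ∃ t, torMul I X t = x := by
  refine Submodule.smul_induction_on hx ?_ ?_
  · intro i hi y _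
    exact ⟨(⟨i, hi⟩ : I) ⊗ₜ y, rfl⟩
  · rintro a b ⟨s, rfl⟩ ⟨t, rfl⟩
    exact ⟨s + t, map_add _ _ _⟩

lemma torMul_natural (I : Ideal R) {X Y : Type} [AddCommGroup X] [Module R X]
    [AddCommGroup Y] [Module R Y] (φ : X →ₗ[R] Y) (t : (↥I) ⊗[R] X) :
    φ (torMul I X t) = torMul I Y (lTensor (↥I) φ t) := by
  induction t with
  | zero => simp
  | tmul i x => simp [map_smul]
  | add a b ha hb => simp [map_add, ha, hb]

lemma torMul_injective_of_flat (I : Ideal R) (X : Type) [AddCommGroup X] [Module R X]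
    [Module.Flat R X] : Function.Injective (torMul I X) := by
  have h := (Module.Flat.iff_rTensor_injective' (R := R) (M := X)).mp inferInstance I
  have heq : torMul I X = (TensorProduct.lid R X).toLinearMap ∘ₗ rTensor X I.subtype := by
    rw [LinearMap.lid_comp_rTensor]
    rfl
  rw [heq]
  exact (TensorProduct.lid R X).injective.comp h

lemma smul_top_le_comap (I : Ideal R) {X Y : Type} [AddCommGroup X] [Module R X]
    [AddCommGroup Y] [Module R Y] (φ : X →ₗ[R] Y) :
    I • (⊤ : Submodule R X) ≤ (I • (⊤ : Submodule R Y)).comap φ := by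
  intro x hx
  obtain ⟨t, rfl⟩ := exists_torMul I hx
  simp only [Submodule.mem_comap]
  rw [torMul_natural]
  exact torMul_mem _ _

/-- Injectivity of tensoring a map with `R ⧸ I` is equivalent to a condition on
`I`-multiples. -/
lemma lTensor_quot_inj_iff (I : Ideal R) {X Y : Type} [AddCommGroup X] [Module R X]
    [AddCommGroup Y] [Module R Y] (φ : X →ₗ[R] Y) :
    Function.Injective (lTensor (R ⧸ I) φ) ↔
      ∀ x : X, φ x ∈ I • (⊤ : Submodule R Y) → x ∈ I • (⊤ : Submodule R X) := by
  set q : (X ⧸ (I • (⊤ : Submodule R X))) →ₗ[R] (Y ⧸ (I • (⊤ : Submodule R Y))) :=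
    Submodule.mapQ _ _ φ (smul_top_le_comap I φ)
  have hsq : ∀ t : (R ⧸ I) ⊗[R] X,
      quotTensorEquivQuotSMul Y I (lTensor (R ⧸ I) φ t)
        = q (quotTensorEquivQuotSMul X I t) := by
    intro t
    induction t with
    | zero => simp
    | tmul r x =>
      obtain ⟨r, rfl⟩ := Ideal.Quotient.mk_surjective r
      simp only [lTensor_tmul, quotTensorEquivQuotSMul_mk_tmul, q, Submodule.mapQ_apply,
        map_smul]
    | add a b ha hb => simp [map_add, ha, hb]
  have hqeq : Function.Injective (lTensor (R ⧸ I) φ) ↔ Function.Injective q := by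
    constructor
    · intro h a b hab
      obtain ⟨a, rfl⟩ := (quotTensorEquivQuotSMul X I).surjective a
      obtain ⟨b, rfl⟩ := (quotTensorEquivQuotSMul X I).surjective b
      rw [← hsq, ← hsq] at hab
      rw [h ((quotTensorEquivQuotSMul Y I).injective hab)]
    · intro h a b hab
      apply (quotTensorEquivQuotSMul X I).injective
      apply h
      rw [← hsq, ← hsq, hab]
  rw [hqeq]
  constructor
  · intro h x hx
    have : q (Submodule.Quotient.mk x) = 0 := by
      simp only [q, Submodule.mapQ_apply]
      rwa [Submodule.Quotient.mk_eq_zero]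
    have := h (a₁ := Submodule.Quotient.mk x) (a₂ := 0) (by simpa using this)
    rwa [← Submodule.Quotient.mk_eq_zero (I • ⊤)]
  · intro h
    rw [← LinearMap.ker_eq_bot]
    rw [Submodule.eq_bot_iff]
    intro a ha
    obtain ⟨x, rfl⟩ := Submodule.Quotient.mk_surjective _ a
    rw [LinearMap.mem_ker, Submodule.mapQ_apply, Submodule.Quotient.mk_eq_zero] at ha
    rw [Submodule.Quotient.mk_eq_zero]
    exact h x ha

/-- The key homological computation: for a two-step resolution with flat `P0`,
exactness after tensoring with `R ⧸ I` is equivalent to injectivity of `I ⊗ X → X`. -/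
lemma exact_lTensor_quot_iff (I : Ideal R) {P2 P1 P0 X : Type}
    [AddCommGroup P2] [Module R P2] [AddCommGroup P1] [Module R P1]
    [AddCommGroup P0] [Module R P0] [AddCommGroup X] [Module R X]
    (d2 : P2 →ₗ[R] P1) (d1 : P1 →ₗ[R] P0) (π : P0 →ₗ[R] X)
    (h21 : Function.Exact d2 d1) (h10 : Function.Exact d1 π)
    (hπ : Function.Surjective π) [Module.Flat R P0] :
    Function.Exact (lTensor (R ⧸ I) d2) (lTensor (R ⧸ I) d1) ↔
      Function.Injective (torMul I X) := by
  set K := LinearMap.range d1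
  set ι : K →ₗ[R] P0 := K.subtype
  set e : P1 →ₗ[R] K := d1.rangeRestrict
  have hιe : ι ∘ₗ e = d1 := by ext x; rfl
  have h2e : Function.Exact d2 e := by
    rw [LinearMap.exact_iff, LinearMap.ker_rangeRestrict, ← LinearMap.exact_iff]
    exact h21
  have hE : Function.Exact (lTensor (R ⧸ I) d2) (lTensor (R ⧸ I) e) :=
    lTensor_exact (R ⧸ I) h2e d1.surjective_rangeRestrict
  have hcomp : lTensor (R ⧸ I) d1 = (lTensor (R ⧸ I) ι) ∘ₗ (lTensor (R ⧸ I) e) := by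
    rw [← lTensor_comp, hιe]
  have hιπ : Function.Exact ι π := by
    rw [LinearMap.exact_iff]
    rw [LinearMap.exact_iff] at h10
    rw [Submodule.range_subtype, h10]
  have hπι : π ∘ₗ ι = 0 := by
    ext k
    obtain ⟨p, hp⟩ := k.2
    simp only [LinearMap.comp_apply, LinearMap.zero_apply, ι, Submodule.coe_subtype]
    rw [← hp]
    exact h10.apply_apply_eq_zero p
  -- Step a
  have stepa : Function.Exact (lTensor (R ⧸ I) d2) (lTensor (R ⧸ I) d1) ↔
      Function.Injective (lTensor (R ⧸ I) ι) := by
    constructor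
    · intro hbig
      rw [injective_iff_map_eq_zero]
      intro y hy
      obtain ⟨z, rfl⟩ := LinearMap.lTensor_surjective (R ⧸ I) d1.surjective_rangeRestrict y
      have hz : lTensor (R ⧸ I) d1 z = 0 := by
        rw [hcomp]; exact hy
      obtain ⟨w, hw⟩ := (hbig z).mp hz
      rw [← hw]
      exact (hE _).mpr ⟨w, rfl⟩
    · intro hinj z
      constructor
      · intro hz
        have : lTensor (R ⧸ I) e z = 0 := by
          apply hinj
          rw [map_zero]
          rw [hcomp] at hz
          exact hz
        exact (hE z).mp this
      · rintro ⟨w, rfl⟩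
        have : d1 ∘ₗ d2 = 0 := by
          ext p; exact h21.apply_apply_eq_zero p
        rw [← LinearMap.comp_apply, ← lTensor_comp, this, lTensor_zero]
        rfl
  rw [stepa, lTensor_quot_inj_iff]
  -- Step b
  have hexactI : Function.Exact (lTensor (↥I) ι) (lTensor (↥I) π) :=
    lTensor_exact (↥I) hιπ hπ
  constructor
  · intro hcond
    rw [injective_iff_map_eq_zero]
    intro u hu
    obtain ⟨t, rfl⟩ := LinearMap.lTensor_surjective (↥I) hπ u
    have h1 : π (torMul I P0 t) = 0 := by
      rw [torMul_natural, hu]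
    have hk : torMul I P0 t ∈ K := (h10 _).mp h1
    obtain ⟨s, hs⟩ := exists_torMul I (hcond ⟨torMul I P0 t, hk⟩ (torMul_mem _ _))
    have h2 : torMul I P0 (t - lTensor (↥I) ι s) = 0 := by
      rw [map_sub, ← torMul_natural, hs]
      exact sub_eq_zero_of_eq rfl
    have h3 : t = lTensor (↥I) ι s := by
      have := torMul_injective_of_flat I P0 (a₁ := t - lTensor (↥I) ι s) (a₂ := 0)
        (by simpa using h2)
      exact sub_eq_zero.mp this
    rw [h3, ← LinearMap.comp_apply, ← lTensor_comp, hπι, lTensor_zero]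
    rfl
  · intro hμ k hk
    obtain ⟨t, ht⟩ := exists_torMul I hk
    have h1 : torMul I X (lTensor (↥I) π t) = 0 := by
      rw [← torMul_natural, ht]
      exact hιπ.apply_apply_eq_zero k
    have h2 : lTensor (↥I) π t = 0 := by
      rw [injective_iff_map_eq_zero] at hμ
      exact hμ _ h1
    obtain ⟨s, rfl⟩ := (hexactI t).mp h2
    have h3 : (ι (torMul I K s) : P0) = ι k := by
      rw [torMul_natural, ht]
    have h4 : torMul I K s = k := Subtype.ext_iff.mpr h3
    rw [← h4]
    exact torMul_mem _ _

end Aux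

section TorChar

open TensorProduct LinearMap Limits MonoidalCategory

variable {R : Type} [CommRing R]

/-- `Tor₁(R⧸I, X)` vanishes iff `I ⊗ X → X` is injective. -/
lemma isZero_tor_iff (I : Ideal R) (X : Type) [AddCommGroup X] [Module R X] :
    Limits.IsZero (((Tor (ModuleCat R) 1).obj (ModuleCat.of R (R ⧸ I))).obj (ModuleCat.of R X))
      ↔ Function.Injective (torMul I X) := by
  set A : ModuleCat R := ModuleCat.of R (R ⧸ I)
  set F : ModuleCat R ⥤ ModuleCat R := (tensoringLeft (ModuleCat R)).obj A with hF
  obtain ⟨P⟩ := (HasProjectiveResolution.out (Z := ModuleCat.of R X))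
  have e : (((Tor (ModuleCat R) 1).obj A).obj (ModuleCat.of R X)) ≅
      ((F.mapHomologicalComplex _).obj P.complex).homology 1 :=
    P.isoLeftDerivedObj F 1
  have h1 : Limits.IsZero (((Tor (ModuleCat R) 1).obj A).obj (ModuleCat.of R X)) ↔
      Limits.IsZero (((F.mapHomologicalComplex _).obj P.complex).homology 1) :=
    ⟨fun h => (h.of_iso e.symm), fun h => h.of_iso e⟩
  rw [h1, ← HomologicalComplex.exactAt_iff_isZero_homology,
      HomologicalComplex.exactAt_iff' _ 2 1 0 (by simp) (by simp),
      ShortComplex.moduleCat_exact_iff_range_eq_ker]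
  have hd21 : ((F.mapHomologicalComplex _).obj P.complex).d 2 1
      = ModuleCat.ofHom ((P.complex.d 2 1).hom.lTensor (R ⧸ I)) := rfl
  have hd10 : ((F.mapHomologicalComplex _).obj P.complex).d 1 0
      = ModuleCat.ofHom ((P.complex.d 1 0).hom.lTensor (R ⧸ I)) := rfl
  have flat0 : Module.Flat R (P.complex.X 0) := by
    haveI hproj : Module.Projective R (P.complex.X 0) :=
      (IsProjective.iff_projective (P := ↥(P.complex.X 0))).mpr
        (show Projective (ModuleCat.of R ↥(P.complex.X 0)) from
          inferInstanceAs (Projective (P.complex.X 0)))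
    infer_instance
  have h21 : Function.Exact (P.complex.d 2 1).hom (P.complex.d 1 0).hom := by
    have := P.exact_succ 0
    rw [ShortComplex.moduleCat_exact_iff_range_eq_ker] at this
    rw [LinearMap.exact_iff, ← this]
  have h10 : Function.Exact (P.complex.d 1 0).hom (P.π.f 0).hom := by
    have := P.exact₀
    rw [ShortComplex.moduleCat_exact_iff_range_eq_ker] at this
    rw [LinearMap.exact_iff, ← this]
  have hπsurj : Function.Surjective (P.π.f 0).hom :=
    (ModuleCat.epi_iff_surjective _).mp inferInstance
  have key := exact_lTensor_quot_iff I (P.complex.d 2 1).hom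
    (P.complex.d 1 0).hom (P.π.f 0).hom h21 h10 hπsurj
  rw [LinearMap.exact_iff] at key
  exact eq_comm.trans key

end TorChar

/-- If `0 → M → N → L → 0` is a pure exact sequence and `N` is semi-regular flat,
then so are `M` and `L`. -/
theorem isSemiregularFlat_of_pure (R : Type) [CommRing R]
    (M N L : Type) [AddCommGroup M] [Module R M] [AddCommGroup N] [Module R N]
    [AddCommGroup L] [Module R L]
    (f : M →ₗ[R] N) (g : N →ₗ[R] L)
    (hf : Function.Injective f) (hg : Function.Surjective g)
    (hfg : Function.Exact f g)
    (hpure : ∀ (P : Type) (_ : AddCommGroup P) (_ : Module R P),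
      Function.Injective (LinearMap.rTensor P f))
    (hN : IsSemiregularFlat R N) :
    IsSemiregularFlat R M ∧ IsSemiregularFlat R L := by
  open TensorProduct LinearMap in
  constructor
  · intro I hIfg hIsr
    rw [isZero_tor_iff]
    have hNμ : Function.Injective (torMul I N) := (isZero_tor_iff I N).mp (hN I hIfg hIsr)
    have hlt : Function.Injective (LinearMap.lTensor (↥I) f) :=
      (LinearMap.lTensor_inj_iff_rTensor_inj _ f).mpr (hpure (↥I) _ _)
    intro a b hab
    apply hlt
    apply hNμ
    rw [← torMul_natural, ← torMul_natural, hab]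
  · intro I hIfg hIsr
    rw [isZero_tor_iff]
    have hNμ : Function.Injective (torMul I N) := (isZero_tor_iff I N).mp (hN I hIfg hIsr)
    rw [injective_iff_map_eq_zero]
    intro u hu
    obtain ⟨t, rfl⟩ := LinearMap.lTensor_surjective (↥I) hg u
    have h1 : g (torMul I N t) = 0 := by rw [torMul_natural, hu]
    obtain ⟨m, hm⟩ := (hfg (torMul I N t)).mp h1
    have hfm : f m ∈ I • (⊤ : Submodule R N) := by
      rw [hm]; exact torMul_mem _ _
    have hquot : Function.Injective (LinearMap.lTensor (R ⧸ I) f) :=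
      (LinearMap.lTensor_inj_iff_rTensor_inj _ f).mpr (hpure (R ⧸ I) _ _)
    have hmM : m ∈ I • (⊤ : Submodule R M) :=
      (lTensor_quot_inj_iff I f).mp hquot m hfm
    obtain ⟨s, hs⟩ := exists_torMul I hmM
    have h2 : torMul I N (t - LinearMap.lTensor (↥I) f s) = 0 := by
      rw [map_sub, ← torMul_natural, hs, hm, sub_self]
    have h3 : t = LinearMap.lTensor (↥I) f s := by
      have := hNμ (a₁ := t - LinearMap.lTensor (↥I) f s) (a₂ := 0) (by simpa using h2)
      exact sub_eq_zero.mp this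
    have h4 : g ∘ₗ f = 0 := by ext p; exact hfg.apply_apply_eq_zero p
    rw [h3, ← LinearMap.comp_apply, ← LinearMap.lTensor_comp, h4, LinearMap.lTensor_zero]
    rfl

end
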